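/- Γ₃ is a subgroup of Γ₆, and the index of Γ₃ in Γ₆ equals 2. -/

import Mathlib

/-!
Setup: `PSL(2,ℂ)` as the quotient of `SL(2,ℂ)` by its center, the constants
`u = (1+√5)/2`, `ω = (1+√(-3))/2 = (1+√3·i)/2`, and the generators of the
tetrahedral groups of Neumann–Reid.
-/

noncomputable section

abbrev SL2C := Matrix.SpecialLinearGroup (Fin 2) ℂ

/-- `PSL(2,ℂ)`, the quotient of `SL(2,ℂ)` by its center `{±I}`. -/
abbrev PSL2C := SL2C ⧸ Subgroup.center SL2C

/-- The projection `SL(2,ℂ) → PSL(2,ℂ)`, `A ↦ [A]`. -/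
def pr : SL2C →* PSL2C := QuotientGroup.mk' _

def u : ℂ := ((1 + Real.sqrt 5) / 2 : ℝ)
def ω : ℂ := (1 + Real.sqrt 3 * Complex.I) / 2

lemma u_ne : u ≠ 0 := Complex.ofReal_ne_zero.mpr (by positivity)

lemma ω_ne : ω ≠ 0 := by
  unfold ω
  intro h
  rw [div_eq_zero_iff] at h
  rcases h with h | h
  · have := congrArg Complex.re h
    simp at this
  · norm_num at h

def xSL : SL2C := ⟨!![u, -u⁻¹; u, 0], by
  rw [Matrix.det_fin_two_of]; field_simp [u_ne]; ring⟩

def ySL : SL2C := ⟨!![0, ω * u⁻¹; -ω⁻¹ * u, 0], by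
  rw [Matrix.det_fin_two_of]; field_simp [u_ne, ω_ne]; ring⟩

def zSL : SL2C := ⟨!![0, ω ^ 2 * u⁻¹; -(ω ^ 2)⁻¹ * u, 0], by
  rw [Matrix.det_fin_two_of]; field_simp [u_ne, ω_ne]; ring⟩

def x : PSL2C := pr xSL
def y : PSL2C := pr ySL
def z : PSL2C := pr zSL

def zSL' : SL2C := ⟨!![0, Complex.I * u⁻¹; Complex.I * u, 0], by
  rw [Matrix.det_fin_two_of]
  field_simp [u_ne]
  rw [Complex.I_sq]
  ring⟩

def z' : PSL2C := pr zSL'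

/-- The tetrahedral group `Γ(5,2,2,3,3,3)` as a subgroup of `PSL(2,ℂ)`. -/
def Γ₃ : Subgroup PSL2C := Subgroup.closure {x, y, z}

/-- The tetrahedral group `Γ(5,2,2,6,2,3)` as a subgroup of `PSL(2,ℂ)`. -/
def Γ₆ : Subgroup PSL2C := Subgroup.closure {x, y, z'}

noncomputable def rt5 : ℂ := (Real.sqrt 5 : ℝ)
noncomputable def rt3 : ℂ := (Real.sqrt 3 : ℝ)

lemma hrt5 : rt5 ^ 2 = 5 := by
  unfold rt5; norm_cast; exact_mod_cast Real.sq_sqrt (by norm_num)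

lemma hrt3 : rt3 ^ 2 = 3 := by
  unfold rt3; norm_cast; exact_mod_cast Real.sq_sqrt (by norm_num)

lemma hu5 : u = (1 + rt5) / 2 := by unfold u rt5; push_cast; ring

lemma hu2 : u ^ 2 = u + 1 := by rw [hu5]; linear_combination hrt5 / 4

lemma hui : u⁻¹ = u - 1 := by
  refine inv_eq_of_mul_eq_one_right ?_
  linear_combination hu2

lemma hω3 : ω = (1 + rt3 * Complex.I) / 2 := by unfold ω rt3; ring

lemma hω2 : ω ^ 2 = ω - 1 := by
  rw [hω3]; linear_combination (Complex.I ^ 2 / 4) * hrt3 + (3 / 4) * Complex.I_sq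

lemma hωi : ω⁻¹ = 1 - ω := by
  refine inv_eq_of_mul_eq_one_right ?_
  linear_combination - hω2

lemma hω2i : (ω ^ 2)⁻¹ = -ω := by
  refine inv_eq_of_mul_eq_one_right ?_
  rw [hω3]
  linear_combination (-(Complex.I ^ 2 * (3 + rt3 * Complex.I)) / 8) * hrt3 + (-(9 + 3 * rt3 * Complex.I) / 8) * Complex.I_sq

/-- The subring `ℚ + ℚ√5 + ℚ√3i + ℚ√15i` of `ℂ`. -/
def F : Subring ℂ where
  carrier := {v | ∃ a b c d : ℚ,
    v = a + b * rt5 + c * rt3 * Complex.I + d * rt5 * rt3 * Complex.I}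
  zero_mem' := ⟨0, 0, 0, 0, by push_cast; ring⟩
  one_mem' := ⟨1, 0, 0, 0, by push_cast; ring⟩
  add_mem' := by
    rintro x y ⟨a, b, c, d, rfl⟩ ⟨a', b', c', d', rfl⟩
    exact ⟨a + a', b + b', c + c', d + d', by push_cast; ring⟩
  neg_mem' := by
    rintro x ⟨a, b, c, d, rfl⟩
    exact ⟨-a, -b, -c, -d, by push_cast; ring⟩
  mul_mem' := by
    rintro x y ⟨a, b, c, d, rfl⟩ ⟨a', b', c', d', rfl⟩
    refine ⟨a * a' + 5 * b * b' - 3 * c * c' - 15 * d * d',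
      a * b' + a' * b - 3 * c * d' - 3 * c' * d,
      a * c' + a' * c + 5 * b * d' + 5 * b' * d,
      a * d' + a' * d + b * c' + b' * c, ?_⟩
    push_cast
    linear_combination
      ((b : ℂ) * b' + ((b : ℂ) * d' + (b' : ℂ) * d) * rt3 * Complex.I
        + (d : ℂ) * d' * rt3 ^ 2 * Complex.I ^ 2) * hrt5
      + (((c : ℂ) * c' + ((c : ℂ) * d' + (c' : ℂ) * d) * rt5 + 5 * (d : ℂ) * d')
          * Complex.I ^ 2) * hrt3
      + (3 * (c : ℂ) * c' + 3 * ((c : ℂ) * d' + (c' : ℂ) * d) * rt5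
          + 15 * (d : ℂ) * d') * Complex.I_sq

lemma not_sq_3 (q : ℚ) : q ^ 2 ≠ 3 := by
  intro h
  have irr : Irrational (Real.sqrt 3) := (by norm_num : Nat.Prime 3).irrational_sqrt
  refine irr ⟨|q|, ?_⟩
  rw [Rat.cast_abs, ← Real.sqrt_sq_eq_abs]
  norm_num
  congr 1
  exact_mod_cast h

lemma not_sq_15 (q : ℚ) : q ^ 2 ≠ 15 := by
  intro h
  have irr : Irrational (Real.sqrt 15) := by
    have : Irrational (Real.sqrt ((15 : ℕ) : ℝ)) := by
      refine irrational_sqrt_natCast_iff.mpr ?_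
      rintro ⟨r, hr⟩
      have : r ≤ 3 ∨ 4 ≤ r := by omega
      rcases this with h' | h' <;> nlinarith
    simpa using this
  refine irr ⟨|q|, ?_⟩
  rw [Rat.cast_abs, ← Real.sqrt_sq_eq_abs]
  norm_num
  congr 1
  exact_mod_cast h

lemma real_key (c d : ℚ)
    (h : (Real.sqrt 5 - 1) / 2 = c * Real.sqrt 3 + d * (Real.sqrt 5 * Real.sqrt 3)) :
    False := by
  set r5 := Real.sqrt 5 with hr5def
  set r3 := Real.sqrt 3 with hr3def
  have h5 : r5 ^ 2 = 5 := Real.sq_sqrt (by norm_num)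
  have h3 : r3 ^ 2 = 3 := Real.sq_sqrt (by norm_num)
  have hq : ((6 * c ^ 2 + 30 * d ^ 2 - 3 : ℚ) : ℝ)
      + ((12 * c * d + 1 : ℚ) : ℝ) * r5 = 0 := by
    push_cast
    linear_combination (-2 * ((c : ℝ) * r3 + d * (r5 * r3) + (r5 - 1) / 2)) * h
      + (-2 * ((c : ℝ) + d * r5) ^ 2) * h3 + (1 / 2 - 6 * (d : ℝ) ^ 2) * h5
  have irr5 : Irrational r5 := (by norm_num : Nat.Prime 5).irrational_sqrt
  have hA : (12 * c * d + 1 : ℚ) = 0 := by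
    by_contra hA0
    have hA0' : ((12 * c * d + 1 : ℚ) : ℝ) ≠ 0 := by
      intro hh
      exact hA0 (by exact_mod_cast hh)
    refine irr5 ⟨-(6 * c ^ 2 + 30 * d ^ 2 - 3) / (12 * c * d + 1), ?_⟩
    rw [Rat.cast_div, div_eq_iff hA0']
    push_cast at hq ⊢
    linarith
  have hB : (6 * c ^ 2 + 30 * d ^ 2 - 3 : ℚ) = 0 := by
    rw [hA] at hq
    push_cast at hq
    have : (6 * (c : ℝ) ^ 2 + 30 * (d : ℝ) ^ 2 - 3 : ℝ) = 0 := by linarith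
    exact_mod_cast this
  have h1 : c * d = -1 / 12 := by linarith
  have h2 : c ^ 2 + 5 * d ^ 2 = 1 / 2 := by linarith
  have hquart : (12 * c ^ 2 - 1) * (12 * c ^ 2 - 5) = 0 := by
    linear_combination (144 * c ^ 2) * h2 + (-720 * c * d + 60) * h1
  rcases mul_eq_zero.mp hquart with hcase | hcase
  · exact not_sq_3 (6 * c) (by linear_combination 3 * hcase)
  · exact not_sq_15 (6 * c) (by linear_combination 3 * hcase)

lemma key : Complex.I * u⁻¹ ∉ F := by
  rintro ⟨a, b, c, d, h⟩
  rw [hui] at h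
  unfold u rt5 rt3 at h
  have him := congrArg Complex.im h
  push_cast at him
  simp [Complex.add_im, Complex.mul_im, Complex.mul_re] at him
  exact real_key c d (by linear_combination him)

lemma humem : u ∈ F := ⟨1/2, 1/2, 0, 0, by rw [hu5]; push_cast; ring⟩
lemma huimem : u⁻¹ ∈ F := ⟨-1/2, 1/2, 0, 0, by rw [hui, hu5]; push_cast; ring⟩
lemma hyb : ω * u⁻¹ ∈ F :=
  ⟨-1/4, 1/4, -1/4, 1/4, by rw [hui, hu5, hω3]; push_cast; ring⟩
lemma hyc : ω⁻¹ * u ∈ F :=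
  ⟨1/4, 1/4, -1/4, -1/4, by rw [hωi, hu5, hω3]; push_cast; ring⟩
lemma hzb : ω ^ 2 * u⁻¹ ∈ F :=
  ⟨1/4, -1/4, -1/4, 1/4, by rw [hω2, hui, hu5, hω3]; push_cast; ring⟩
lemma hzc : (ω ^ 2)⁻¹ * u ∈ F :=
  ⟨-1/4, -1/4, -1/4, -1/4, by rw [hω2i, hu5, hω3]; push_cast; ring⟩

/-- Matrices in `SL(2,ℂ)` with all entries in `F`. -/
def S : Subgroup SL2C where
  carrier := {A | ∀ i j, (A : Matrix (Fin 2) (Fin 2) ℂ) i j ∈ F}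
  one_mem' := by
    intro i j
    fin_cases i <;> fin_cases j <;>
      simp [Matrix.one_apply] <;> first | exact F.one_mem | exact F.zero_mem
  mul_mem' := by
    intro A B hA hB i j
    rw [Matrix.SpecialLinearGroup.coe_mul, Matrix.mul_apply, Fin.sum_univ_two]
    exact F.add_mem (F.mul_mem (hA i 0) (hB 0 j)) (F.mul_mem (hA i 1) (hB 1 j))
  inv_mem' := by
    intro A hA i j
    rw [Matrix.SpecialLinearGroup.coe_inv, Matrix.adjugate_fin_two]
    fin_cases i <;> fin_cases j <;> simp <;>
      first
        | exact hA 1 1 | exact hA 0 1 | exact hA 1 0 | exact hA 0 0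

def T : Subgroup PSL2C := S.map pr

lemma xS : xSL ∈ S := by
  intro i j
  fin_cases i <;> fin_cases j <;> simp [xSL] <;>
    first | exact humem | exact huimem | exact F.zero_mem

lemma yS : ySL ∈ S := by
  intro i j
  fin_cases i <;> fin_cases j <;> simp [ySL] <;>
    first | exact hyb | exact hyc | exact F.zero_mem

lemma zS : zSL ∈ S := by
  intro i j
  fin_cases i <;> fin_cases j <;> simp [zSL] <;>
    first | exact hzb | exact hzc | exact F.zero_mem

lemma z'notT : z' ∉ T := by
  rintro ⟨A, hA, hpr⟩
  have hpr' : QuotientGroup.mk' (Subgroup.center SL2C) A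
      = QuotientGroup.mk' (Subgroup.center SL2C) zSL' := hpr
  obtain ⟨cc, hcc, hAc⟩ := (QuotientGroup.mk'_eq_mk' (Subgroup.center SL2C)).mp hpr'
  obtain ⟨r, hr2, hrscalar⟩ :=
    Matrix.SpecialLinearGroup.mem_center_iff.mp hcc
  have hr2' : r ^ 2 = 1 := by simpa using hr2
  have hr : r = 1 ∨ r = -1 := by
    have hfac : (r - 1) * (r + 1) = 0 := by linear_combination hr2'
    rcases mul_eq_zero.mp hfac with h' | h'
    · left; linear_combination h'
    · right; linear_combination h'
  have hent : Complex.I * u⁻¹ = (A : Matrix (Fin 2) (Fin 2) ℂ) 0 1 * r := by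
    have h1 : ((A * cc : SL2C) : Matrix (Fin 2) (Fin 2) ℂ) 0 1 = Complex.I * u⁻¹ := by
      rw [hAc]; simp [zSL']
    rw [Matrix.SpecialLinearGroup.coe_mul, ← hrscalar] at h1
    rw [← h1]
    rw [Matrix.scalar_apply, Matrix.mul_diagonal]
  have hAF := hA 0 1
  rcases hr with h' | h'
  · rw [h', mul_one] at hent
    exact key (hent ▸ hAF)
  · rw [h', mul_neg_one] at hent
    exact key (by rw [hent]; exact F.neg_mem hAF)

lemma hu3 : u ^ 3 = 2 * u + 1 := by linear_combination (u + 1) * hu2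
lemma hω3' : ω ^ 3 = -1 := by linear_combination (ω + 1) * hω2
lemma hI3 : Complex.I ^ 3 = -Complex.I := by
  rw [pow_succ, Complex.I_sq]; ring

def negOne : SL2C := ⟨!![-1, 0; 0, -1], by rw [Matrix.det_fin_two_of]; ring⟩

lemma negOne_center : negOne ∈ Subgroup.center SL2C := by
  refine Subgroup.mem_center_iff.mpr fun g => ?_
  apply Subtype.ext
  rw [Matrix.SpecialLinearGroup.coe_mul, Matrix.SpecialLinearGroup.coe_mul]
  have : (negOne : Matrix (Fin 2) (Fin 2) ℂ) = -1 := by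
    simp [negOne]
    ext i j; fin_cases i <;> fin_cases j <;> simp
  rw [this, Matrix.mul_neg, Matrix.neg_mul, Matrix.mul_one, Matrix.one_mul]

lemma pr_negOne : pr negOne = 1 := (QuotientGroup.eq_one_iff negOne).mpr negOne_center

lemma pr_neg (A : SL2C) : pr (negOne * A) = pr A := by
  rw [map_mul, pr_negOne, one_mul]

lemma R1 : zSL' * zSL' = negOne := by
  apply Subtype.ext
  rw [Matrix.SpecialLinearGroup.coe_mul]
  show (!![0, Complex.I * u⁻¹; Complex.I * u, 0] * !![0, Complex.I * u⁻¹; Complex.I * u, 0]) = _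
  rw [hui]
  ext i j
  fin_cases i <;> fin_cases j <;>
    simp [negOne, Matrix.mul_apply, Fin.sum_univ_two] <;>
    ring_nf <;> simp only [hu2, hu3, hω2, hω3', Complex.I_sq, hI3] <;> ring_nf

lemma R2 : zSL' * ySL * zSL' = negOne * zSL := by
  apply Subtype.ext
  rw [Matrix.SpecialLinearGroup.coe_mul, Matrix.SpecialLinearGroup.coe_mul,
    Matrix.SpecialLinearGroup.coe_mul]
  show !![0, Complex.I * u⁻¹; Complex.I * u, 0] * !![0, ω * u⁻¹; -ω⁻¹ * u, 0]
      * !![0, Complex.I * u⁻¹; Complex.I * u, 0]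
      = !![-1, 0; 0, -1] * !![0, ω ^ 2 * u⁻¹; -(ω ^ 2)⁻¹ * u, 0]
  rw [hω2i, hωi, hω2, hui]
  ext i j
  fin_cases i <;> fin_cases j <;>
    simp [Matrix.mul_apply, Fin.sum_univ_two] <;>
    ring_nf <;> simp only [hu2, hu3, hω2, hω3', Complex.I_sq, hI3] <;> ring_nf

lemma R3 : zSL' * xSL * zSL' = negOne * xSL⁻¹ := by
  apply Subtype.ext
  rw [Matrix.SpecialLinearGroup.coe_mul, Matrix.SpecialLinearGroup.coe_mul,
    Matrix.SpecialLinearGroup.coe_mul, Matrix.SpecialLinearGroup.coe_inv]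
  show !![0, Complex.I * u⁻¹; Complex.I * u, 0] * !![u, -u⁻¹; u, 0]
      * !![0, Complex.I * u⁻¹; Complex.I * u, 0]
      = !![-1, 0; 0, -1] * Matrix.adjugate !![u, -u⁻¹; u, 0]
  rw [Matrix.adjugate_fin_two, hui]
  ext i j
  fin_cases i <;> fin_cases j <;>
    simp [Matrix.mul_apply, Fin.sum_univ_two] <;>
    ring_nf <;> simp only [hu2, hu3, hω2, hω3', Complex.I_sq, hI3] <;> ring_nf

lemma hz'z' : z' * z' = 1 := by
  show pr zSL' * pr zSL' = 1
  rw [← map_mul, R1, pr_negOne]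

lemma hz'inv : z'⁻¹ = z' := inv_eq_of_mul_eq_one_right hz'z'

lemma hzrel : z = z' * y * z' := by
  show pr zSL = pr zSL' * pr ySL * pr zSL'
  rw [← map_mul, ← map_mul, R2, pr_neg]

lemma hxrel : z' * x * z' = x⁻¹ := by
  show pr zSL' * pr xSL * pr zSL' = (pr xSL)⁻¹
  rw [← map_mul, ← map_mul, R3, pr_neg, map_inv]

lemma hyrel : z' * z * z' = y := by
  rw [hzrel]
  calc z' * (z' * y * z') * z' = (z' * z') * y * (z' * z') := by group
  _ = y := by rw [hz'z']; group

lemma xΓ₃ : x ∈ Γ₃ := Subgroup.subset_closure (by simp)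
lemma yΓ₃ : y ∈ Γ₃ := Subgroup.subset_closure (by simp)
lemma zΓ₃ : z ∈ Γ₃ := Subgroup.subset_closure (by simp)

lemma hconj : ∀ g ∈ Γ₃, z' * g * z' ∈ Γ₃ := by
  intro g hg
  refine Subgroup.closure_induction (p := fun g _ => z' * g * z' ∈ Γ₃)
    ?_ ?_ ?_ ?_ hg
  · rintro w (rfl | rfl | rfl)
    · rw [hxrel]; exact inv_mem xΓ₃
    · rw [← hzrel]; exact zΓ₃
    · rw [hyrel]; exact yΓ₃
  · show z' * 1 * z' ∈ Γ₃
    rw [mul_one, hz'z']; exact one_mem _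
  · intro a b _ _ iha ihb
    show z' * (a * b) * z' ∈ Γ₃
    have e : z' * (a * b) * z' = (z' * a * z') * (z' * b * z') := by
      calc z' * (a * b) * z' = z' * a * 1 * b * z' := by group
      _ = z' * a * (z' * z') * b * z' := by rw [hz'z']
      _ = (z' * a * z') * (z' * b * z') := by group
    rw [e]; exact mul_mem iha ihb
  · intro a _ iha
    show z' * a⁻¹ * z' ∈ Γ₃
    have e : z' * a⁻¹ * z' = (z' * a * z')⁻¹ := by
      rw [mul_inv_rev, mul_inv_rev, hz'inv]; group
    rw [e]; exact inv_mem iha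

lemma cover : ∀ g ∈ Γ₆, g ∈ Γ₃ ∨ g * z' ∈ Γ₃ := by
  intro g hg
  refine Subgroup.closure_induction (p := fun g _ => g ∈ Γ₃ ∨ g * z' ∈ Γ₃)
    ?_ ?_ ?_ ?_ hg
  · rintro w (rfl | rfl | rfl)
    · exact Or.inl xΓ₃
    · exact Or.inl yΓ₃
    · right; rw [hz'z']; exact one_mem _
  · show (1 : PSL2C) ∈ Γ₃ ∨ 1 * z' ∈ Γ₃
    exact Or.inl (one_mem _)
  · intro a b _ _ iha ihb
    show a * b ∈ Γ₃ ∨ a * b * z' ∈ Γ₃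
    rcases iha with ha3 | ha3 <;> rcases ihb with hb3 | hb3
    · exact Or.inl (mul_mem ha3 hb3)
    · right; rw [mul_assoc]; exact mul_mem ha3 hb3
    · right
      have e : a * b * z' = (a * z') * (z' * b * z') := by
        calc a * b * z' = a * 1 * b * z' := by group
        _ = a * (z' * z') * b * z' := by rw [hz'z']
        _ = (a * z') * (z' * b * z') := by group
      rw [e]; exact mul_mem ha3 (hconj b hb3)
    · left
      have e : a * b = (a * z') * (z' * (b * z') * z') := by
        calc a * b = a * 1 * b * 1 := by group
        _ = a * (z' * z') * b * (z' * z') := by rw [hz'z']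
        _ = (a * z') * (z' * (b * z') * z') := by group
      rw [e]; exact mul_mem ha3 (hconj _ hb3)
  · intro a _ iha
    show a⁻¹ ∈ Γ₃ ∨ a⁻¹ * z' ∈ Γ₃
    rcases iha with h3 | h3
    · exact Or.inl (inv_mem h3)
    · right
      have e : a⁻¹ * z' = (z' * (a * z') * z')⁻¹ := by
        have e2 : z' * (a * z') * z' = z' * a := by
          calc z' * (a * z') * z' = z' * a * (z' * z') := by group
          _ = z' * a := by rw [hz'z']; group
        rw [e2, mul_inv_rev, hz'inv]
      rw [e]; exact inv_mem (hconj _ h3)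

lemma z'memΓ₆ : z' ∈ Γ₆ :=
  Subgroup.subset_closure (by simp : z' ∈ ({x, y, z'} : Set PSL2C))
lemma xmemΓ₆ : x ∈ Γ₆ :=
  Subgroup.subset_closure (by simp : x ∈ ({x, y, z'} : Set PSL2C))
lemma ymemΓ₆ : y ∈ Γ₆ :=
  Subgroup.subset_closure (by simp : y ∈ ({x, y, z'} : Set PSL2C))

lemma Γ₃leT : Γ₃ ≤ T := by
  refine (Subgroup.closure_le T).mpr ?_
  rintro w (rfl | rfl | rfl)
  · exact ⟨xSL, xS, rfl⟩
  · exact ⟨ySL, yS, rfl⟩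
  · exact ⟨zSL, zS, rfl⟩

lemma z'notΓ₃ : z' ∉ Γ₃ := fun h => z'notT (Γ₃leT h)

lemma hle : Γ₃ ≤ Γ₆ := by
  refine (Subgroup.closure_le Γ₆).mpr ?_
  rintro w (rfl | rfl | rfl)
  · exact xmemΓ₆
  · exact ymemΓ₆
  · rw [hzrel]
    exact mul_mem (mul_mem z'memΓ₆ ymemΓ₆) z'memΓ₆

/-- `Γ(5,2,2,3,3,3)` is a subgroup of index 2 in `Γ(5,2,2,6,2,3)`. -/
theorem stmt2 : Γ₃ ≤ Γ₆ ∧ Γ₃.relIndex Γ₆ = 2 := by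
  refine ⟨hle, ?_⟩
  rw [Subgroup.relIndex, Subgroup.index_eq_two_iff]
  refine ⟨⟨z', z'memΓ₆⟩, fun b => ?_⟩
  by_cases hbΓ : (b : PSL2C) ∈ Γ₃
  · refine Or.inr ⟨Subgroup.mem_subgroupOf.mpr hbΓ, fun hP => ?_⟩
    have hPm : (b : PSL2C) * z' ∈ Γ₃ := Subgroup.mem_subgroupOf.mp hP
    exact z'notΓ₃ (by simpa using mul_mem (inv_mem hbΓ) hPm)
  · rcases cover b b.2 with h | h
    · exact absurd h hbΓ
    · exact Or.inl ⟨Subgroup.mem_subgroupOf.mpr h,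
        fun hQ => hbΓ (Subgroup.mem_subgroupOf.mp hQ)⟩
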